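/- Let A be a unital Banach algebra over ℂ, let n ≥ 3, let X_1, …, X_n ∈ A and h_1, …, h_n > 0 satisfy ‖X_j‖ ≤ 2h_j, let s > 0 and let r be a positive integer. Assume that for every u ≥ 0, ‖exp(u • X_j)‖ ≤ 1 for each j and ‖exp(u • (X_1 + ⋯ + X_n))‖ ≤ 1. Let F = (1/2)(∏_{j=1}^{n} exp(s • X_j) + ∏_{j=n}^{1} exp(s • X_j)) and λ = Σ_j h_j. Then ‖F^r − exp((r·s) • (X_1 + ⋯ + X_n))‖ ≤ r·[ (8/3)s³ ( λ Σ_j h_j² + (2/3)λ³ ) + (4/3)s⁴ λ⁴ ]. -/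

import Mathlib

open NormedSpace

set_option linter.unusedSectionVars false
set_option maxHeartbeats 1000000

/-- The symmetrized first-order Trotter product
`F(s) = ½(∏_{j=1}^{n} exp(s • X_j) + ∏_{j=n}^{1} exp(s • X_j))`. -/
noncomputable def symTrotter {A : Type*} [NormedRing A] [NormedAlgebra ℂ A]
    [CompleteSpace A] {n : ℕ} (X : Fin n → A) (s : ℝ) : A :=
  (1 / 2 : ℝ) • ((List.ofFn fun j => exp (s • X j)).prod
    + ((List.ofFn fun j => exp (s • X j)).reverse).prod)

namespace TrotterAux

variable {A : Type*} [NormedRing A] [NormedAlgebra ℂ A] [CompleteSpace A]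

def sq2 (l : List A) : A := (l.map (· ^ 2)).sum
def pr2 : List A → A
  | [] => 0
  | X :: l => X * l.sum + pr2 l
def cc2 (l : List A) : A := sq2 l + 2 • pr2 l
def cc3 : List A → A
  | [] => 0
  | X :: l => X ^ 3 + 3 • (X ^ 2 * l.sum) + 3 • (X * cc2 l) + cc3 l

lemma sq2_cons (X : A) (l : List A) : sq2 (X :: l) = X ^ 2 + sq2 l := by simp [sq2]
lemma sq2_snoc (l : List A) (X : A) : sq2 (l ++ [X]) = sq2 l + X ^ 2 := by simp [sq2]
lemma sq2_reverse (l : List A) : sq2 l.reverse = sq2 l := by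
  rw [sq2, sq2, List.map_reverse, List.sum_reverse]
lemma pr2_snoc (l : List A) (X : A) : pr2 (l ++ [X]) = pr2 l + l.sum * X := by
  induction l with
  | nil => simp [pr2]
  | cons Y l ih =>
    simp only [List.cons_append, pr2, List.append_eq, ih, List.sum_append, List.sum_cons,
      List.sum_nil, add_zero, mul_add, add_mul]
    abel
lemma cc2_cons (X : A) (l : List A) : cc2 (X :: l) = X ^ 2 + 2 • (X * l.sum) + cc2 l := by
  simp only [cc2, sq2_cons, pr2, smul_add]; abel
lemma cc2_snoc (l : List A) (X : A) : cc2 (l ++ [X]) = cc2 l + 2 • (l.sum * X) + X ^ 2 := by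
  simp only [cc2, sq2_snoc, pr2_snoc, smul_add]; abel
lemma cc3_snoc (l : List A) (X : A) :
    cc3 (l ++ [X]) = cc3 l + 3 • (cc2 l * X) + 3 • (l.sum * X ^ 2) + X ^ 3 := by
  induction l with
  | nil => simp [cc3, cc2, sq2, pr2]
  | cons Y l ih =>
    simp only [List.cons_append, cc3, List.append_eq, ih, cc2_snoc, cc2_cons, List.sum_append,
      List.sum_cons, List.sum_nil, add_zero, nsmul_eq_mul, Nat.cast_ofNat]
    noncomm_ring
lemma sq_sum (l : List A) : l.sum ^ 2 = sq2 l + pr2 l + pr2 l.reverse := by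
  induction l with
  | nil => simp [sq2, pr2]
  | cons X l ih =>
    simp only [List.sum_cons, sq2_cons, pr2, List.reverse_cons, pr2_snoc, List.sum_reverse]
    calc (X + l.sum) ^ 2 = X ^ 2 + X * l.sum + l.sum * X + l.sum ^ 2 := by noncomm_ring
      _ = _ := by rw [ih]; abel

lemma key_ident (X : A) (M : List A) :
    cc3 (X :: M) + cc3 (M.reverse ++ [X]) - 2 • ((X + M.sum) ^ 3)
      = (cc3 M + cc3 M.reverse - 2 • (M.sum ^ 3))
        + (X ^ 2 * M.sum + M.sum * X ^ 2 - 2 • (X * M.sum * X) - 2 • (M.sum * X * M.sum))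
        + X * (sq2 M + 4 • pr2 M - 2 • pr2 M.reverse)
        + (sq2 M + 4 • pr2 M.reverse - 2 • pr2 M) * X := by
  have hS : M.sum ^ 2 = sq2 M + pr2 M + pr2 M.reverse := sq_sum M
  have e3 : (X + M.sum) ^ 3
      = X^3 + X^2*M.sum + X*M.sum*X + X*(sq2 M + pr2 M + pr2 M.reverse)
        + M.sum*X^2 + M.sum*X*M.sum + (sq2 M + pr2 M + pr2 M.reverse)*X + M.sum^3 := by
    rw [← hS]; noncomm_ring
  have hc2r : cc2 M.reverse = sq2 M + 2 • pr2 M.reverse := by rw [cc2, sq2_reverse]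
  rw [cc3, cc3_snoc, hc2r, List.sum_reverse, e3, cc2]
  simp only [nsmul_eq_mul, Nat.cast_ofNat]
  noncomm_ring

/-! real side -/
def prR : List ℝ → ℝ
  | [] => 0
  | b :: l => b * l.sum + prR l

def sqR (l : List ℝ) : ℝ := (l.map (· ^ 2)).sum

def bbR : List ℝ → ℝ
  | [] => 0
  | b :: l => bbR l + (4*b^2*l.sum + 4*b*sqR l + 16*b*prR l)

lemma sq_sumR (l : List ℝ) : l.sum ^ 2 = sqR l + 2 * prR l := by
  induction l with
  | nil => simp [sqR, prR]
  | cons b l ih =>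
    simp only [List.sum_cons, prR, sqR, List.map_cons, List.sum_cons]
    have : (b + l.sum) ^ 2 = b ^ 2 + 2*(b*l.sum) + l.sum ^ 2 := by ring
    rw [this, ih]; unfold sqR; ring

lemma prR_nonneg {l : List ℝ} (h : ∀ b ∈ l, 0 ≤ b) : 0 ≤ prR l := by
  induction l with
  | nil => simp [prR]
  | cons b l ih =>
    have hb := h b (by simp)
    have hs : 0 ≤ l.sum := List.sum_nonneg fun x hx => h x (by simp [hx])
    have := ih fun x hx => h x (by simp [hx])
    simp only [prR]; positivity

lemma sqR_nonneg (l : List ℝ) : 0 ≤ sqR l :=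
  List.sum_nonneg (by intro x hx; simp only [List.mem_map] at hx; obtain ⟨b, _, rfl⟩ := hx; positivity)

lemma norm_mul_le_of {x y : A} {bx by' : ℝ} (hx : ‖x‖ ≤ bx) (hy : ‖y‖ ≤ by') :
    ‖x * y‖ ≤ bx * by' :=
  (norm_mul_le x y).trans (mul_le_mul hx hy (norm_nonneg _) ((norm_nonneg x).trans hx))


-- new part
lemma norm_sum_fst_le (P : List (A × ℝ)) (hb : ∀ p ∈ P, ‖p.1‖ ≤ p.2) :
    ‖(P.map Prod.fst).sum‖ ≤ (P.map Prod.snd).sum := by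
  induction P with
  | nil => simp
  | cons p P ih =>
    simp only [List.map_cons, List.sum_cons]
    exact (norm_add_le _ _).trans (add_le_add (hb p (by simp))
      (ih fun q hq => hb q (by simp [hq])))

lemma norm_sq2_fst_le (P : List (A × ℝ)) (hb : ∀ p ∈ P, ‖p.1‖ ≤ p.2) :
    ‖sq2 (P.map Prod.fst)‖ ≤ sqR (P.map Prod.snd) := by
  induction P with
  | nil => simp [sq2, sqR]
  | cons p P ih =>
    simp only [List.map_cons, sq2, sqR, List.sum_cons]
    refine (norm_add_le _ _).trans (add_le_add ?_ (ih fun q hq => hb q (by simp [hq])))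
    calc ‖p.1 ^ 2‖ = ‖p.1 * p.1‖ := by rw [sq]
      _ ≤ p.2 * p.2 := norm_mul_le_of (hb p (by simp)) (hb p (by simp))
      _ = p.2 ^ 2 := (sq p.2).symm

lemma norm_pr2_fst_le (P : List (A × ℝ)) (hb : ∀ p ∈ P, ‖p.1‖ ≤ p.2) :
    ‖pr2 (P.map Prod.fst)‖ ≤ prR (P.map Prod.snd) := by
  induction P with
  | nil => simp [pr2, prR]
  | cons p P ih =>
    simp only [List.map_cons, pr2, prR]
    exact (norm_add_le _ _).trans (add_le_add
      (norm_mul_le_of (hb p (by simp)) (norm_sum_fst_le P fun q hq => hb q (by simp [hq])))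
      (ih fun q hq => hb q (by simp [hq])))

lemma norm_pr2_rev_fst_le (P : List (A × ℝ)) (hb : ∀ p ∈ P, ‖p.1‖ ≤ p.2) :
    ‖pr2 (P.map Prod.fst).reverse‖ ≤ prR (P.map Prod.snd) := by
  induction P with
  | nil => simp [pr2, prR]
  | cons p P ih =>
    simp only [List.map_cons, List.reverse_cons, pr2_snoc, List.sum_reverse, prR]
    refine (norm_add_le _ _).trans ?_
    rw [add_comm (p.2 * _)]
    exact add_le_add (ih fun q hq => hb q (by simp [hq]))
      (by
        rw [mul_comm]
        exact norm_mul_le_of (norm_sum_fst_le P fun q hq => hb q (by simp [hq])) (hb p (by simp)))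

lemma bbR_le (l : List ℝ) (h : ∀ b ∈ l, 0 ≤ b) :
    bbR l ≤ 4 * l.sum * sqR l + (8/3) * l.sum ^ 3 := by
  induction l with
  | nil => simp [bbR, sqR]
  | cons b l ih =>
    have hb : 0 ≤ b := h b (by simp)
    have hβ : 0 ≤ l.sum := List.sum_nonneg fun x hx => h x (by simp [hx])
    have hγ : 0 ≤ sqR l := sqR_nonneg l
    have hp : 0 ≤ prR l := prR_nonneg fun x hx => h x (by simp [hx])
    have hsq : l.sum ^ 2 = sqR l + 2 * prR l := sq_sumR l
    have ihl := ih fun x hx => h x (by simp [hx])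
    simp only [bbR, List.sum_cons, sqR, List.map_cons, List.sum_cons]
    have hsqR : sqR l = (l.map (· ^ 2)).sum := rfl
    rw [← hsqR]
    nlinarith [mul_nonneg hb hp, mul_nonneg hb hγ, mul_nonneg (mul_nonneg hb hb) hβ,
      mul_nonneg hb (mul_nonneg hβ hβ), sq_nonneg (b + l.sum), mul_nonneg hβ hγ,
      mul_nonneg (mul_nonneg hβ hβ) hβ, mul_nonneg hb (mul_nonneg hb hb)]


lemma kb (P : List (A × ℝ)) (hb : ∀ p ∈ P, ‖p.1‖ ≤ p.2) :
    ‖cc3 (P.map Prod.fst) + cc3 (P.map Prod.fst).reverse - 2 • ((P.map Prod.fst).sum ^ 3)‖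
      ≤ bbR (P.map Prod.snd) := by
  induction P with
  | nil => simp [cc3, bbR]
  | cons p P ih =>
    have hbP : ∀ q ∈ P, ‖q.1‖ ≤ q.2 := fun q hq => hb q (by simp [hq])
    have hXb : ‖p.1‖ ≤ p.2 := hb p (by simp)
    have hb0 : (0:ℝ) ≤ p.2 := (norm_nonneg _).trans hXb
    set M : List A := P.map Prod.fst with hM
    set X : A := p.1
    set b : ℝ := p.2
    set K : List ℝ := P.map Prod.snd with hK
    have hβ : ‖M.sum‖ ≤ K.sum := norm_sum_fst_le P hbP
    have hβ0 : (0:ℝ) ≤ K.sum := (norm_nonneg _).trans hβ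
    have hγ : ‖sq2 M‖ ≤ sqR K := norm_sq2_fst_le P hbP
    have hγ0 : (0:ℝ) ≤ sqR K := sqR_nonneg K
    have hp : ‖pr2 M‖ ≤ prR K := norm_pr2_fst_le P hbP
    have hq : ‖pr2 M.reverse‖ ≤ prR K := norm_pr2_rev_fst_le P hbP
    have hp0 : (0:ℝ) ≤ prR K := (norm_nonneg _).trans hp
    have hgoal : ((p :: P).map Prod.fst) = X :: M := by simp [hM]; rfl
    have hrev : (X :: M).reverse = M.reverse ++ [X] := by simp
    have hbbR : bbR ((p :: P).map Prod.snd)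
        = bbR K + (4*b^2*K.sum + 4*b*sqR K + 16*b*prR K) := by simp [hK, bbR]; rfl
    rw [hgoal, hrev, hbbR, List.sum_cons, key_ident]
    have hX2 : ‖X ^ 2‖ ≤ b * b := by rw [sq]; exact norm_mul_le_of hXb hXb
    have h1 : ‖X ^ 2 * M.sum‖ ≤ b * b * K.sum := norm_mul_le_of hX2 hβ
    have h2 : ‖M.sum * X ^ 2‖ ≤ K.sum * (b * b) := norm_mul_le_of hβ hX2
    have h3 : ‖X * M.sum * X‖ ≤ b * K.sum * b :=
      norm_mul_le_of (norm_mul_le_of hXb hβ) hXb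
    have h4 : ‖M.sum * X * M.sum‖ ≤ K.sum * b * K.sum :=
      norm_mul_le_of (norm_mul_le_of hβ hXb) hβ
    have hinner1 : ‖sq2 M + 4 • pr2 M - 2 • pr2 M.reverse‖
        ≤ sqR K + 4 * prR K + 2 * prR K := by
      have n1 : ‖(4:ℕ) • pr2 M‖ ≤ 4 * prR K := norm_nsmul_le.trans (by push_cast; linarith)
      have n2 : ‖(2:ℕ) • pr2 M.reverse‖ ≤ 2 * prR K :=
        norm_nsmul_le.trans (by push_cast; linarith)
      exact (norm_sub_le _ _).trans (add_le_add ((norm_add_le _ _).trans (add_le_add hγ n1)) n2)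
    have hinner2 : ‖sq2 M + 4 • pr2 M.reverse - 2 • pr2 M‖
        ≤ sqR K + 4 * prR K + 2 * prR K := by
      have n1 : ‖(4:ℕ) • pr2 M.reverse‖ ≤ 4 * prR K :=
        norm_nsmul_le.trans (by push_cast; linarith)
      have n2 : ‖(2:ℕ) • pr2 M‖ ≤ 2 * prR K := norm_nsmul_le.trans (by push_cast; linarith)
      exact (norm_sub_le _ _).trans (add_le_add ((norm_add_le _ _).trans (add_le_add hγ n1)) n2)
    have n3 : ‖(2:ℕ) • (X * M.sum * X)‖ ≤ 2 * (b * K.sum * b) :=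
      norm_nsmul_le.trans (by push_cast; linarith)
    have n4 : ‖(2:ℕ) • (M.sum * X * M.sum)‖ ≤ 2 * (K.sum * b * K.sum) :=
      norm_nsmul_le.trans (by push_cast; linarith)
    have hG2 : ‖X ^ 2 * M.sum + M.sum * X ^ 2 - 2 • (X * M.sum * X) - 2 • (M.sum * X * M.sum)‖
        ≤ b * b * K.sum + K.sum * (b * b) + 2 * (b * K.sum * b) + 2 * (K.sum * b * K.sum) :=
      (norm_sub_le _ _).trans (add_le_add ((norm_sub_le _ _).trans
        (add_le_add ((norm_add_le _ _).trans (add_le_add h1 h2)) n3)) n4)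
    have hG3 : ‖X * (sq2 M + 4 • pr2 M - 2 • pr2 M.reverse)‖
        ≤ b * (sqR K + 4 * prR K + 2 * prR K) := norm_mul_le_of hXb hinner1
    have hG4 : ‖(sq2 M + 4 • pr2 M.reverse - 2 • pr2 M) * X‖
        ≤ (sqR K + 4 * prR K + 2 * prR K) * b := norm_mul_le_of hinner2 hXb
    have hsq : K.sum ^ 2 = sqR K + 2 * prR K := sq_sumR K
    calc ‖_ + _ + _ + _‖
        ≤ ‖cc3 M + cc3 M.reverse - 2 • (M.sum ^ 3)‖
          + ‖X ^ 2 * M.sum + M.sum * X ^ 2 - 2 • (X * M.sum * X) - 2 • (M.sum * X * M.sum)‖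
          + ‖X * (sq2 M + 4 • pr2 M - 2 • pr2 M.reverse)‖
          + ‖(sq2 M + 4 • pr2 M.reverse - 2 • pr2 M) * X‖ := by
            exact (norm_add_le _ _).trans (add_le_add ((norm_add_le _ _).trans
              (add_le_add (norm_add_le _ _) le_rfl)) le_rfl)
      _ ≤ bbR K + (4*b^2*K.sum + 4*b*sqR K + 16*b*prR K) := by
            nlinarith [ih hbP, hG2, hG3, hG4, mul_nonneg hb0 hp0, mul_nonneg hb0 hγ0,
              mul_nonneg (mul_nonneg hb0 hb0) hβ0, mul_nonneg hb0 (mul_nonneg hβ0 hβ0)]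

/-- `pd l k u` is the `k`-th derivative of `u ↦ ∏_{X ∈ l} exp(u • X)`. -/
noncomputable def pd : List A → ℕ → ℝ → A
  | [], 0, _ => 1
  | [], _ + 1, _ => 0
  | X :: l, k, u => ∑ j ∈ Finset.range (k + 1),
      (k.choose j) • (X ^ (k - j) * exp (u • X) * pd l j u)

lemma hasDerivAt_expR (X : A) (u : ℝ) :
    HasDerivAt (fun v : ℝ => exp (v • X)) (X * exp (u • X)) u := by
  have := hasDerivAt_exp_smul_const' (𝕂 := ℝ) X u
  exact this

lemma pd_zero (l : List A) (u : ℝ) :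
    pd l 0 u = (l.map (fun X => exp (u • X))).prod := by
  induction l with
  | nil => simp [pd]
  | cons X l ih => simp [pd, ih]

lemma pd_hasDerivAt (l : List A) (k : ℕ) (u : ℝ) :
    HasDerivAt (fun v => pd l k v) (pd l (k + 1) u) u := by
  induction l generalizing k u with
  | nil =>
    cases k with
    | zero => simpa [pd] using (hasDerivAt_const u (1 : A))
    | succ k => simpa [pd] using (hasDerivAt_const u (0 : A))
  | cons X l ih =>
    have hterm : ∀ j ∈ Finset.range (k + 1), HasDerivAt
        (fun v => (k.choose j) • (X ^ (k - j) * exp (v • X) * pd l j v))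
        ((k.choose j) • (X ^ (k + 1 - j) * exp (u • X) * pd l j u
          + X ^ (k - j) * exp (u • X) * pd l (j + 1) u)) u := by
      intro j hj
      simp only [Finset.mem_range, Nat.lt_succ_iff] at hj
      have hmul : HasDerivAt (fun v => X ^ (k - j) * exp (v • X) * pd l j v)
          ((X ^ (k - j) * (X * exp (u • X))) * pd l j u
            + X ^ (k - j) * exp (u • X) * pd l (j + 1) u) u :=
        ((hasDerivAt_expR X u).const_mul (X ^ (k - j))).mul (ih j u)
      have : X ^ (k - j) * (X * exp (u • X)) = X ^ (k + 1 - j) * exp (u • X) := by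
        rw [← mul_assoc, ← pow_succ, Nat.sub_add_comm hj]
      rw [this] at hmul
      exact hmul.const_smul (k.choose j)
    have hsum := HasDerivAt.sum hterm
    convert hsum using 1
    show pd (X :: l) (k + 1) u = _
    rw [pd]
    -- reindex identity
    have key : ∀ G : ℕ → A,
        (∑ j ∈ Finset.range (k + 2), ((k+1).choose j) • G j)
        = (∑ j ∈ Finset.range (k + 1), (k.choose j) • G j)
          + (∑ j ∈ Finset.range (k + 1), (k.choose j) • G (j + 1)) := by
      intro G
      rw [Finset.sum_range_succ' (fun j => ((k+1).choose j) • G j) (k + 1),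
        Finset.sum_range_succ' (fun j => (k.choose j) • G j) k]
      have h1 : ∑ j ∈ Finset.range (k + 1), (k.choose (j+1)) • G (j+1)
          = ∑ j ∈ Finset.range k, (k.choose (j+1)) • G (j+1) := by
        rw [Finset.sum_range_succ]
        simp
      rw [← h1, add_right_comm, ← Finset.sum_add_distrib]
      simp only [Nat.choose_succ_succ, add_smul, Nat.choose_zero_right, one_smul, add_comm]
    rw [key (fun j => X ^ (k + 1 - j) * exp (u • X) * pd l j u)]
    simp only [smul_add, Finset.sum_add_distrib, Nat.succ_sub_succ]
    · rfl
    funext v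
    rw [Finset.sum_apply, pd]

variable [NormOneClass A]

lemma pd_norm_le (l : List A) (hc : ∀ X ∈ l, ∀ u : ℝ, 0 ≤ u → ‖exp (u • X)‖ ≤ 1)
    (k : ℕ) (u : ℝ) (hu : 0 ≤ u) :
    ‖pd l k u‖ ≤ ((l.map norm).sum) ^ k := by
  induction l generalizing k with
  | nil =>
    cases k with
    | zero => simp [pd]
    | succ k => simp [pd]
  | cons X l ih =>
    have hcl : ∀ Y ∈ l, ∀ u : ℝ, 0 ≤ u → ‖exp (u • Y)‖ ≤ 1 :=
      fun Y hY => hc Y (by simp [hY])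
    have hE : ‖exp (u • X)‖ ≤ 1 := hc X (by simp) u hu
    have hβ0 : (0:ℝ) ≤ (l.map norm).sum :=
      List.sum_nonneg (by intro x hx; simp only [List.mem_map] at hx
                          obtain ⟨Y, _, rfl⟩ := hx; exact norm_nonneg Y)
    calc ‖pd (X :: l) k u‖
        ≤ ∑ j ∈ Finset.range (k + 1),
            (k.choose j : ℝ) * (‖X‖ ^ (k - j) * ((l.map norm).sum) ^ j) := by
          rw [pd]
          refine (norm_sum_le _ _).trans (Finset.sum_le_sum fun j hj => ?_)
          refine norm_nsmul_le.trans ?_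
          gcongr ?_ * ?_
          · calc ‖X ^ (k - j) * exp (u • X) * pd l j u‖
                ≤ ‖X ^ (k - j) * exp (u • X)‖ * ‖pd l j u‖ := norm_mul_le _ _
              _ ≤ ‖X‖ ^ (k - j) * ((l.map norm).sum) ^ j := by
                  refine mul_le_mul ?_ (ih hcl j) (norm_nonneg _) (by positivity)
                  calc ‖X ^ (k - j) * exp (u • X)‖ ≤ ‖X ^ (k - j)‖ * ‖exp (u • X)‖ :=
                        norm_mul_le _ _
                    _ ≤ ‖X‖ ^ (k - j) * 1 := mul_le_mul (norm_pow_le _ _) hE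
                        (norm_nonneg _) (by positivity)
                    _ = ‖X‖ ^ (k - j) := mul_one _
      _ = ((l.map norm).sum + ‖X‖) ^ k := by
          rw [add_pow]
          refine Finset.sum_congr rfl fun j hj => ?_
          ring
      _ = (((X :: l).map norm).sum) ^ k := by rw [add_comm]; simp

lemma pd_zero_at_zero (l : List A) : pd l 0 0 = 1 := by
  induction l with
  | nil => rfl
  | cons X l ih => simp [pd, ih, exp_zero]

lemma pd_one_at_zero (l : List A) : pd l 1 0 = l.sum := by
  induction l with
  | nil => rfl
  | cons X l ih =>
    rw [pd]
    simp [Finset.sum_range_succ, ih, pd_zero_at_zero, exp_zero]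

lemma pd_two_at_zero (l : List A) : pd l 2 0 = cc2 l := by
  induction l with
  | nil => simp [pd, cc2, sq2, pr2]
  | cons X l ih =>
    rw [pd, cc2_cons]
    norm_num [Finset.sum_range_succ, exp_zero, ih, pd_zero_at_zero, pd_one_at_zero]
    try abel

lemma pd_three_at_zero (l : List A) : pd l 3 0 = cc3 l := by
  induction l with
  | nil => simp [pd, cc3]
  | cons X l ih =>
    rw [pd, cc3]
    norm_num [Finset.sum_range_succ, exp_zero, ih, pd_zero_at_zero, pd_one_at_zero,
      pd_two_at_zero]
    try abel


lemma taylor_step {f f' : ℝ → A} {s C : ℝ} {k : ℕ}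
    (hd : ∀ u, HasDerivAt f (f' u) u) (h0 : f 0 = 0)
    (hb : ∀ u, 0 ≤ u → u ≤ s → ‖f' u‖ ≤ C * u ^ k) :
    ∀ u, 0 ≤ u → u ≤ s → ‖f u‖ ≤ C / (k + 1) * u ^ (k + 1) := by
  intro u hu hus
  have hB : ∀ x : ℝ, HasDerivAt (fun x : ℝ => C / (k + 1) * x ^ (k + 1)) (C * x ^ k) x := by
    intro x
    have := (hasDerivAt_pow (k + 1) x).const_mul (C / (k + 1))
    refine this.congr_deriv ?_
    have hk : ((k:ℝ) + 1) ≠ 0 := by positivity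
    rw [Nat.add_sub_cancel]; push_cast
    field_simp
  have H := image_norm_le_of_norm_deriv_right_le_deriv_boundary
    (f := f) (f' := f') (a := 0) (b := u)
    (fun x _ => (hd x).continuousAt.continuousWithinAt)
    (fun x _ => (hd x).hasDerivWithinAt)
    (by simp [h0])
    hB
    (fun x hx => hb x hx.1 (hx.2.le.trans hus))
  exact H (Set.right_mem_Icc.2 hu)

lemma pow_sub_pow_norm_le [NormOneClass A] {a b : A} (ha : ‖a‖ ≤ 1) (hb : ‖b‖ ≤ 1) (r : ℕ) :
    ‖a ^ r - b ^ r‖ ≤ r * ‖a - b‖ := by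
  induction r with
  | zero => simp
  | succ n ih =>
    have hid : a ^ (n + 1) - b ^ (n + 1) = a ^ n * (a - b) + (a ^ n - b ^ n) * b := by
      noncomm_ring
    rw [hid]
    have h1 : ‖a ^ n * (a - b)‖ ≤ 1 * ‖a - b‖ :=
      (norm_mul_le _ _).trans (mul_le_mul ((norm_pow_le _ _).trans (pow_le_one₀
        (norm_nonneg _) ha)) le_rfl (norm_nonneg _) zero_le_one)
    have h2 : ‖(a ^ n - b ^ n) * b‖ ≤ (n * ‖a - b‖) * 1 :=
      (norm_mul_le _ _).trans (mul_le_mul ih hb (norm_nonneg _)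
        (by positivity))
    calc ‖_ + _‖ ≤ ‖a ^ n * (a - b)‖ + ‖(a ^ n - b ^ n) * b‖ := norm_add_le _ _
      _ ≤ 1 * ‖a - b‖ + (n * ‖a - b‖) * 1 := add_le_add h1 h2
      _ = (n + 1 : ℕ) * ‖a - b‖ := by push_cast; ring


lemma norm_prod_le_one [NormOneClass A] (l : List A) (h : ∀ x ∈ l, ‖x‖ ≤ 1) :
    ‖l.prod‖ ≤ 1 := by
  induction l with
  | nil => simp
  | cons x l ih =>
    rw [List.prod_cons]
    calc ‖x * l.prod‖ ≤ ‖x‖ * ‖l.prod‖ := norm_mul_le _ _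
      _ ≤ 1 * 1 := mul_le_mul (h x (by simp)) (ih fun y hy => h y (by simp [hy]))
          (norm_nonneg _) zero_le_one
      _ = 1 := one_mul 1

lemma cc2_add_rev (l : List A) : cc2 l + cc2 l.reverse = 2 • (l.sum ^ 2) := by
  rw [cc2, cc2, sq2_reverse, sq_sum]
  simp only [smul_add]
  abel

lemma single_step {A : Type*} [NormedRing A] [NormedAlgebra ℂ A] [CompleteSpace A]
    [NormOneClass A] {n : ℕ} (X : Fin n → A) (h : Fin n → ℝ)
    (hpos : ∀ j, 0 ≤ h j) (hX : ∀ j, ‖X j‖ ≤ 2 * h j) {s : ℝ} (hs : 0 ≤ s)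
    (hcon1 : ∀ u : ℝ, 0 ≤ u → ∀ j, ‖exp (u • X j)‖ ≤ 1)
    (hcon2 : ∀ u : ℝ, 0 ≤ u → ‖exp (u • ∑ j : Fin n, X j)‖ ≤ 1) :
    ‖symTrotter X s - exp (s • ∑ j : Fin n, X j)‖
      ≤ (8/3) * s^3 * ((∑ j, h j) * (∑ j, h j ^ 2) + (2/3) * (∑ j, h j)^3)
        + (4/3) * s^4 * (∑ j, h j)^4 := by
  set H : A := ∑ j : Fin n, X j with hH
  set lam : ℝ := ∑ j : Fin n, h j with hlam
  set L : List A := List.ofFn X with hL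
  set Lr : List A := L.reverse with hLr
  have hc : ∀ Y ∈ L, ∀ u : ℝ, 0 ≤ u → ‖exp (u • Y)‖ ≤ 1 := by
    intro Y hY u hu
    rw [hL, List.mem_ofFn] at hY
    obtain ⟨j, rfl⟩ := hY
    exact hcon1 u hu j
  have hcr : ∀ Y ∈ Lr, ∀ u : ℝ, 0 ≤ u → ‖exp (u • Y)‖ ≤ 1 := by
    intro Y hY
    exact hc Y (by rwa [hLr, List.mem_reverse] at hY)
  have hsumL : L.sum = H := by rw [hL, List.sum_ofFn]
  have hsumLr : Lr.sum = H := by rw [hLr, List.sum_reverse, hsumL]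
  have hlam0 : 0 ≤ lam := Finset.sum_nonneg fun j _ => hpos j
  have hsq0 : 0 ≤ ∑ j, h j ^ 2 := Finset.sum_nonneg fun j _ => sq_nonneg _
  have hnormsum : (L.map norm).sum ≤ 2 * lam := by
    rw [hL, List.map_ofFn, List.sum_ofFn]
    calc ∑ j, ‖X j‖ ≤ ∑ j, 2 * h j := Finset.sum_le_sum fun j _ => hX j
      _ = 2 * lam := by rw [hlam, Finset.mul_sum]
  have hnormsum0 : 0 ≤ (L.map norm).sum := by
    refine List.sum_nonneg ?_
    intro x hx
    simp only [List.mem_map] at hx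
    obtain ⟨Y, _, rfl⟩ := hx
    exact norm_nonneg Y
  have hnormsumr : (Lr.map norm).sum = (L.map norm).sum := by
    rw [hLr, List.map_reverse, List.sum_reverse]
  have hHnorm : ‖H‖ ≤ 2 * lam := by
    rw [hH]
    calc ‖∑ j, X j‖ ≤ ∑ j, ‖X j‖ := norm_sum_le _ _
      _ ≤ ∑ j, 2 * h j := Finset.sum_le_sum fun j _ => hX j
      _ = 2 * lam := by rw [hlam, Finset.mul_sum]
  -- the third-order coefficient
  set K : A := (1/2 : ℝ) • (cc3 L + cc3 Lr) - H ^ 3 with hKK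
  have hKbound : ‖K‖ ≤ 16 * lam * (∑ j, h j ^ 2) + 32/3 * lam ^ 3 := by
    set P : List (A × ℝ) := List.ofFn (fun j => (X j, 2 * h j)) with hP
    have hfst : P.map Prod.fst = L := by rw [hP, List.map_ofFn, hL]; rfl
    have hsnd : P.map Prod.snd = List.ofFn (fun j => 2 * h j) := by rw [hP, List.map_ofFn]; rfl
    have hbP : ∀ p ∈ P, ‖p.1‖ ≤ p.2 := by
      intro p hp
      rw [hP, List.mem_ofFn] at hp
      obtain ⟨j, rfl⟩ := hp
      exact hX j
    have hT := kb P hbP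
    rw [hfst, hsnd] at hT
    have hKhalf : K = (1/2 : ℝ) • (cc3 L + cc3 L.reverse - 2 • (L.sum ^ 3)) := by
      rw [hKK, hLr, hsumL, smul_sub]
      congr 1
      rw [← Nat.cast_smul_eq_nsmul ℝ, smul_smul]
      norm_num
    have hKnorm : ‖K‖ ≤ (1/2 : ℝ) * bbR (List.ofFn fun j => 2 * h j) := by
      rw [hKhalf]
      refine (_root_.norm_smul_le _ _).trans ?_
      have : ‖(1/2 : ℝ)‖ = 1/2 := by rw [Real.norm_eq_abs]; norm_num
      rw [this]
      linarith [hT]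
    have hsum2 : (List.ofFn fun j => 2 * h j).sum = 2 * lam := by
      rw [List.sum_ofFn, hlam, Finset.mul_sum]
    have hsqR2 : sqR (List.ofFn fun j => 2 * h j) = 4 * ∑ j, h j ^ 2 := by
      rw [sqR, List.map_ofFn, List.sum_ofFn, Finset.mul_sum]
      refine Finset.sum_congr rfl fun j _ => ?_
      simp only [Function.comp_apply]
      ring
    have hben : ∀ b ∈ (List.ofFn fun j => 2 * h j), (0:ℝ) ≤ b := by
      intro b hbmem
      rw [List.mem_ofFn] at hbmem
      obtain ⟨j, rfl⟩ := hbmem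
      show (0:ℝ) ≤ 2 * h j
      linarith [hpos j]
    have hbb := bbR_le (List.ofFn fun j => 2 * h j) hben
    rw [hsum2, hsqR2] at hbb
    calc ‖K‖ ≤ (1/2 : ℝ) * bbR (List.ofFn fun j => 2 * h j) := hKnorm
      _ ≤ (1/2 : ℝ) * (4 * (2 * lam) * (4 * ∑ j, h j ^ 2) + 8/3 * (2 * lam) ^ 3) := by
          have h0 : (0:ℝ) ≤ 1/2 := by norm_num
          exact mul_le_mul_of_nonneg_left hbb h0
      _ = 16 * lam * (∑ j, h j ^ 2) + 32/3 * lam ^ 3 := by ring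
  -- the auxiliary functions
  set g0 : ℝ → A := fun u => (1/2:ℝ) • (pd L 0 u + pd Lr 0 u)
      - H ^ 0 * exp (u • H) - (u^3/6) • K with hg0
  set g1 : ℝ → A := fun u => (1/2:ℝ) • (pd L 1 u + pd Lr 1 u)
      - H ^ 1 * exp (u • H) - (u^2/2) • K with hg1
  set g2 : ℝ → A := fun u => (1/2:ℝ) • (pd L 2 u + pd Lr 2 u)
      - H ^ 2 * exp (u • H) - u • K with hg2
  set g3 : ℝ → A := fun u => (1/2:ℝ) • (pd L 3 u + pd Lr 3 u)
      - H ^ 3 * exp (u • H) - K with hg3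
  set g4 : ℝ → A := fun u => (1/2:ℝ) • (pd L 4 u + pd Lr 4 u)
      - H ^ 4 * exp (u • H) with hg4
  have he : ∀ (k : ℕ) (u : ℝ),
      HasDerivAt (fun v : ℝ => H ^ k * exp (v • H)) (H ^ (k+1) * exp (u • H)) u := by
    intro k u
    have := (hasDerivAt_expR H u).const_mul (H ^ k)
    convert this using 1
    rw [← mul_assoc, ← pow_succ]
  have hF : ∀ (k : ℕ) (u : ℝ), HasDerivAt (fun v => (1/2:ℝ) • (pd L k v + pd Lr k v))
      ((1/2:ℝ) • (pd L (k+1) u + pd Lr (k+1) u)) u := fun k u =>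
    ((pd_hasDerivAt L k u).add (pd_hasDerivAt Lr k u)).const_smul (1/2:ℝ)
  have hd0 : ∀ u, HasDerivAt g0 (g1 u) u := by
    intro u
    have hpoly : HasDerivAt (fun v : ℝ => (v^3/6) • K) ((u^2/2) • K) u := by
      have := ((hasDerivAt_pow 3 u).div_const 6).smul_const K
      refine this.congr_deriv ?_
      norm_num
      ring
    exact ((hF 0 u).sub (he 0 u)).sub hpoly
  have hd1 : ∀ u, HasDerivAt g1 (g2 u) u := by
    intro u
    have hpoly : HasDerivAt (fun v : ℝ => (v^2/2) • K) (u • K) u := by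
      have := ((hasDerivAt_pow 2 u).div_const 2).smul_const K
      refine this.congr_deriv ?_
      norm_num
    exact ((hF 1 u).sub (he 1 u)).sub hpoly
  have hd2 : ∀ u, HasDerivAt g2 (g3 u) u := by
    intro u
    have hpoly : HasDerivAt (fun v : ℝ => v • K) K u := by
      have := (hasDerivAt_id u).smul_const K
      simpa using this
    exact ((hF 2 u).sub (he 2 u)).sub hpoly
  have hd3 : ∀ u, HasDerivAt g3 (g4 u) u := by
    intro u
    have := ((hF 3 u).sub (he 3 u)).sub (hasDerivAt_const u K)
    simp only [sub_zero] at this; exact this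
  -- values at zero
  have hexp0 : exp ((0:ℝ) • H) = 1 := by rw [zero_smul, exp_zero]
  have hg00 : g0 0 = 0 := by
    have h2 : (1/2:ℝ) • ((1:A) + 1) = 1 := by
      rw [← two_smul ℝ (1:A), smul_smul]; norm_num
    rw [hg0]
    simp only [pd_zero_at_zero, hexp0, pow_zero, one_mul, h2]
    norm_num
  have hg10 : g1 0 = 0 := by
    have h2 : (1/2:ℝ) • (H + H) = H := by
      rw [← two_smul ℝ H, smul_smul]; norm_num
    rw [hg1]
    simp only [pd_one_at_zero, hsumL, hsumLr, hexp0, pow_one, mul_one, h2]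
    norm_num
  have hg20 : g2 0 = 0 := by
    have h2 : (1/2:ℝ) • (cc2 L + cc2 Lr) = H ^ 2 := by
      rw [hLr, cc2_add_rev, hsumL, ← Nat.cast_smul_eq_nsmul ℝ, smul_smul]
      norm_num
    rw [hg2]
    simp only [pd_two_at_zero, hexp0, mul_one, h2]
    norm_num
  have hg30 : g3 0 = 0 := by
    rw [hg3]
    simp only [pd_three_at_zero, hexp0, mul_one, hKK]
    abel
  -- fourth-derivative bound
  have hb4 : ∀ u : ℝ, 0 ≤ u → u ≤ s → ‖g4 u‖ ≤ 32 * lam ^ 4 := by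
    intro u hu _
    have p1 : ‖pd L 4 u‖ ≤ (2 * lam) ^ 4 :=
      (pd_norm_le L hc 4 u hu).trans (pow_le_pow_left₀ hnormsum0 hnormsum 4)
    have p2 : ‖pd Lr 4 u‖ ≤ (2 * lam) ^ 4 := by
      refine (pd_norm_le Lr hcr 4 u hu).trans ?_
      rw [hnormsumr]
      exact pow_le_pow_left₀ hnormsum0 hnormsum 4
    have p3 : ‖H ^ 4 * exp (u • H)‖ ≤ (2 * lam) ^ 4 := by
      have := norm_mul_le_of (x := H ^ 4) (y := exp (u • H))
        ((norm_pow_le H 4).trans (pow_le_pow_left₀ (norm_nonneg H) hHnorm 4))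
        (hcon2 u hu)
      simpa using this
    have phalf : ‖(1/2:ℝ) • (pd L 4 u + pd Lr 4 u)‖ ≤ (2 * lam) ^ 4 := by
      refine (_root_.norm_smul_le _ _).trans ?_
      have hnn : ‖(1/2:ℝ)‖ = 1/2 := by rw [Real.norm_eq_abs]; norm_num
      rw [hnn]
      have := (norm_add_le (pd L 4 u) (pd Lr 4 u)).trans (add_le_add p1 p2)
      linarith
    rw [hg4]
    calc ‖(1/2:ℝ) • (pd L 4 u + pd Lr 4 u) - H ^ 4 * exp (u • H)‖
        ≤ ‖(1/2:ℝ) • (pd L 4 u + pd Lr 4 u)‖ + ‖H ^ 4 * exp (u • H)‖ := norm_sub_le _ _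
      _ ≤ (2 * lam) ^ 4 + (2 * lam) ^ 4 := add_le_add phalf p3
      _ = 32 * lam ^ 4 := by ring
  -- Taylor chain
  have b3 : ∀ u : ℝ, 0 ≤ u → u ≤ s → ‖g3 u‖ ≤ 32 * lam ^ 4 * u ^ 1 := by
    intro u hu hus
    have := taylor_step (k := 0) hd3 hg30 (fun u hu hus => by simpa using hb4 u hu hus) u hu hus
    refine le_trans this (le_of_eq ?_)
    push_cast
    ring
  have b2 : ∀ u : ℝ, 0 ≤ u → u ≤ s → ‖g2 u‖ ≤ 16 * lam ^ 4 * u ^ 2 := by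
    intro u hu hus
    have := taylor_step (k := 1) hd2 hg20 b3 u hu hus
    refine le_trans this (le_of_eq ?_)
    push_cast
    ring
  have b1 : ∀ u : ℝ, 0 ≤ u → u ≤ s → ‖g1 u‖ ≤ 16/3 * lam ^ 4 * u ^ 3 := by
    intro u hu hus
    have := taylor_step (k := 2) hd1 hg10 b2 u hu hus
    refine le_trans this (le_of_eq ?_)
    push_cast
    ring
  have b0 : ‖g0 s‖ ≤ 4/3 * lam ^ 4 * s ^ 4 := by
    have := taylor_step (k := 3) hd0 hg00 b1 s hs le_rfl
    refine le_trans this (le_of_eq ?_)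
    push_cast
    ring
  -- put everything together
  have hFE : symTrotter X s - exp (s • H) = g0 s + (s^3/6) • K := by
    have hpdL : pd L 0 s = (List.ofFn fun j => exp (s • X j)).prod := by
      rw [pd_zero, hL, List.map_ofFn]
      rfl
    have hpdLr : pd Lr 0 s = ((List.ofFn fun j => exp (s • X j)).reverse).prod := by
      rw [pd_zero, hLr, List.map_reverse, hL, List.map_ofFn]
      rfl
    rw [hg0, symTrotter]
    simp only [pow_zero, one_mul, hpdL, hpdLr]
    abel
  have hKfinal : ‖(s^3/6) • K‖ ≤ s^3/6 * (16 * lam * (∑ j, h j ^ 2) + 32/3 * lam ^ 3) := by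
    refine (_root_.norm_smul_le _ _).trans ?_
    have hnn : ‖(s^3/6 : ℝ)‖ = s^3/6 := by
      rw [Real.norm_eq_abs, abs_of_nonneg (by positivity)]
    rw [hnn]
    have h6 : (0:ℝ) ≤ s^3/6 := by positivity
    exact mul_le_mul_of_nonneg_left hKbound h6
  calc ‖symTrotter X s - exp (s • H)‖ = ‖g0 s + (s^3/6) • K‖ := by rw [hFE]
    _ ≤ ‖g0 s‖ + ‖(s^3/6) • K‖ := norm_add_le _ _
    _ ≤ 4/3 * lam ^ 4 * s ^ 4 + s^3/6 * (16 * lam * (∑ j, h j ^ 2) + 32/3 * lam ^ 3) :=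
        add_le_add b0 hKfinal
    _ = (8/3) * s^3 * (lam * (∑ j, h j ^ 2) + (2/3) * lam ^3) + (4/3) * s^4 * lam ^ 4 := by
        ring

end TrotterAux

/-- Corollary 1 (simulation error of randomized first-order Trotter): with
`λ = Σ_j h_j`,
`‖F^r − exp(r·s • Σ_j X_j)‖ ≤ r·[(8/3)s³(λ Σ_j h_j² + (2/3)λ³) + (4/3)s⁴ λ⁴]`. -/
theorem stmt_1 {A : Type*} [NormedRing A] [NormedAlgebra ℂ A]
    [CompleteSpace A] [NormOneClass A] (n : ℕ) (hn : 3 ≤ n)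
    (X : Fin n → A) (h : Fin n → ℝ) (hpos : ∀ j, 0 < h j)
    (hX : ∀ j, ‖X j‖ ≤ 2 * h j)
    (s : ℝ) (hs : 0 < s) (r : ℕ) (hr : 0 < r)
    (hcon1 : ∀ u : ℝ, 0 ≤ u → ∀ j, ‖exp (u • X j)‖ ≤ 1)
    (hcon2 : ∀ u : ℝ, 0 ≤ u → ‖exp (u • ∑ j : Fin n, X j)‖ ≤ 1) :
    ‖(symTrotter X s) ^ r - exp (((r : ℝ) * s) • ∑ j : Fin n, X j)‖
      ≤ r * ((8 / 3) * s ^ 3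
            * ((∑ j : Fin n, h j) * (∑ j : Fin n, (h j) ^ 2)
                + (2 / 3) * (∑ j : Fin n, h j) ^ 3)
          + (4 / 3) * s ^ 4 * (∑ j : Fin n, h j) ^ 4) := by
  have hexp_pow : exp (((r : ℝ) * s) • ∑ j : Fin n, X j)
      = (exp (s • ∑ j : Fin n, X j)) ^ r := by
    letI : NormedAlgebra ℚ A := NormedAlgebra.restrictScalars ℚ ℂ A
    rw [mul_smul, Nat.cast_smul_eq_nsmul, exp_nsmul]
  have hF1 : ‖symTrotter X s‖ ≤ 1 := by
    rw [symTrotter]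
    refine (_root_.norm_smul_le _ _).trans ?_
    have hP : ‖(List.ofFn fun j => exp (s • X j)).prod‖ ≤ 1 := by
      refine TrotterAux.norm_prod_le_one _ ?_
      intro x hx
      rw [List.mem_ofFn] at hx
      obtain ⟨j, rfl⟩ := hx
      exact hcon1 s hs.le j
    have hPr : ‖((List.ofFn fun j => exp (s • X j)).reverse).prod‖ ≤ 1 := by
      refine TrotterAux.norm_prod_le_one _ ?_
      intro x hx
      rw [List.mem_reverse, List.mem_ofFn] at hx
      obtain ⟨j, rfl⟩ := hx
      exact hcon1 s hs.le j
    have hsum := (norm_add_le _ _).trans (add_le_add hP hPr)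
    have hn12 : ‖(1/2 : ℝ)‖ = 1/2 := by rw [Real.norm_eq_abs]; norm_num
    rw [hn12]
    linarith
  have hE1 : ‖exp (s • ∑ j : Fin n, X j)‖ ≤ 1 := hcon2 s hs.le
  have htel := TrotterAux.pow_sub_pow_norm_le hF1 hE1 r
  have hss := TrotterAux.single_step X h (fun j => (hpos j).le) hX hs.le hcon1 hcon2
  calc ‖(symTrotter X s) ^ r - exp (((r : ℝ) * s) • ∑ j : Fin n, X j)‖
      = ‖(symTrotter X s) ^ r - (exp (s • ∑ j : Fin n, X j)) ^ r‖ := by rw [hexp_pow]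
    _ ≤ r * ‖symTrotter X s - exp (s • ∑ j : Fin n, X j)‖ := htel
    _ ≤ r * ((8 / 3) * s ^ 3
            * ((∑ j : Fin n, h j) * (∑ j : Fin n, (h j) ^ 2)
                + (2 / 3) * (∑ j : Fin n, h j) ^ 3)
          + (4 / 3) * s ^ 4 * (∑ j : Fin n, h j) ^ 4) :=
        mul_le_mul_of_nonneg_left hss (Nat.cast_nonneg r)
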